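/- The crumbling map commutes with the boundary and the intersection product: for every k ≥ 1, the ℚ-linear map ι : EC_N → EC_{N·k} defined on basis elements by ι(P a) = P (ρ a), ι(I a) = I (ρ a), ι(S a) = Σ_{j=0}^{k−1} S (ρ a + j), where ρ : ZMod N → ZMod (N·k) is the well-defined map [a] ↦ [k·a], satisfies ι(∂x) = ∂(ι x) and ι(μ(x, y)) = μ(ι x, ι y) for all x, y ∈ EC_N. -/

import Mathlib

/-- Basis elements of the one-dimensional enlarged complex of period `N`:
points `P a`, elemental sticks `S a` (the interval `[a, a+1]`), and
infinitesimal sticks `I a`. -/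
inductive B (N : ℕ) : Type where
  | P : ZMod N → B N
  | S : ZMod N → B N
  | I : ZMod N → B N
  deriving DecidableEq

/-- The enlarged one-dimensional chain complex: the free ℚ-vector space on `B N`. -/
abbrev EC (N : ℕ) : Type := B N →₀ ℚ

namespace B

variable {N : ℕ}

/-- Codimension: 1 for points, 0 for sticks and infinitesimal sticks. -/
def cod : B N → ℕ
  | P _ => 1
  | _ => 0

/-- Basis element viewed in `EC N`. -/
noncomputable def e (u : B N) : EC N := Finsupp.single u 1

/-- The transverse intersection product on basis elements. -/
noncomputable def muB : B N → B N → EC N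
  | P _, P _ => 0
  | P a, S b => if b = a ∨ b = a - 1 then Finsupp.single (P a) (1/2) else 0
  | S b, P a => if b = a ∨ b = a - 1 then Finsupp.single (P a) (1/2) else 0
  | P a, I b => if b = a then Finsupp.single (P a) (1/4) else 0
  | I b, P a => if b = a then Finsupp.single (P a) (1/4) else 0
  | S a, S b =>
      if b = a then
        Finsupp.single (I a) (-1) + Finsupp.single (S a) 1 + Finsupp.single (I (a+1)) (-1)
      else if b = a + 1 then Finsupp.single (I (a+1)) 1
      else if b = a - 1 then Finsupp.single (I a) 1
      else 0
  | S a, I b => if b = a ∨ b = a + 1 then Finsupp.single (I b) (1/2) else 0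
  | I b, S a => if b = a ∨ b = a + 1 then Finsupp.single (I b) (1/2) else 0
  | I a, I b => if b = a then Finsupp.single (I a) (1/4) else 0

/-- Boundary on basis elements: `∂ (S a) = P (a+1) - P a`, zero otherwise. -/
noncomputable def bdB : B N → EC N
  | S a => Finsupp.single (P (a+1)) 1 - Finsupp.single (P a) 1
  | _ => 0

/-- Augmentation on basis elements. -/
def epsB : B N → ℚ
  | P _ => 1
  | _ => 0

end B

/-- Bilinear extension of the basis product to `EC N`. -/
noncomputable def mu {N : ℕ} (x y : EC N) : EC N :=
  x.sum fun u cu => y.sum fun v cv => (cu * cv) • B.muB u v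

/-- Linear extension of the boundary to `EC N`. -/
noncomputable def bd {N : ℕ} (x : EC N) : EC N := x.sum fun u cu => cu • B.bdB u

/-- Augmentation `ε : EC N → ℚ`. -/
noncomputable def eps {N : ℕ} (x : EC N) : ℚ := x.sum fun u cu => cu * B.epsB u

/-- The augmentation pairing `⟨x, y⟩ = ε (μ x y)`. -/
noncomputable def pair {N : ℕ} (x y : EC N) : ℚ := eps (mu x y)

/-- The subcomplex `C_N` spanned by points and elemental sticks. -/
noncomputable def Csub (N : ℕ) : Submodule ℚ (EC N) :=
  Submodule.span ℚ
    (Set.range (fun a : ZMod N => Finsupp.single (B.P a) (1 : ℚ)) ∪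
     Set.range (fun a : ZMod N => Finsupp.single (B.S a) (1 : ℚ)))

/-- The well-defined map `ZMod N → ZMod (N·k)`, `[a] ↦ [k·a]`. -/
def rho (N k : ℕ) (a : ZMod N) : ZMod (N * k) := ((k * a.val : ℕ) : ZMod (N * k))

/-- Crumbling on basis elements: points and infinitesimal sticks map to their images,
an elemental stick crumbles into `k` elemental sticks. -/
noncomputable def iotaB (N k : ℕ) : B N → EC (N * k)
  | .P a => Finsupp.single (.P (rho N k a)) 1
  | .I a => Finsupp.single (.I (rho N k a)) 1
  | .S a => ∑ j ∈ Finset.range k, Finsupp.single (.S (rho N k a + (j : ZMod (N * k)))) 1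

/-- The crumbling chain map `EC N → EC (N·k)`. -/
noncomputable def iota (N k : ℕ) (x : EC N) : EC (N * k) :=
  x.sum fun u cu => cu • iotaB N k u
namespace IotaAux

open B Finsupp

variable {N k : ℕ}

lemma mu_single_single (u v : B N) (c d : ℚ) :
    mu (Finsupp.single u c) (Finsupp.single v d) = (c * d) • B.muB u v := by
  unfold mu
  rw [Finsupp.sum_single_index (by simp), Finsupp.sum_single_index (by simp)]

lemma mu_zero_left (y : EC N) : mu 0 y = 0 := by simp [mu]

lemma mu_zero_right (x : EC N) : mu x 0 = 0 := by simp [mu]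

lemma mu_add_left (x x' y : EC N) : mu (x + x') y = mu x y + mu x' y := by
  unfold mu
  apply Finsupp.sum_add_index' (by simp)
  intro u b₁ b₂
  rw [← Finsupp.sum_add]
  refine Finsupp.sum_congr fun v _ => ?_
  rw [add_mul, add_smul]

lemma mu_add_right (x y y' : EC N) : mu x (y + y') = mu x y + mu x y' := by
  unfold mu
  rw [← Finsupp.sum_add]
  refine Finsupp.sum_congr fun u _ => ?_
  apply Finsupp.sum_add_index' (by simp)
  intro v b₁ b₂
  rw [mul_add, add_smul]

lemma mu_smul_left (c : ℚ) (x y : EC N) : mu (c • x) y = c • mu x y := by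
  unfold mu
  rw [Finsupp.sum_smul_index (by simp), Finsupp.smul_sum]
  refine Finsupp.sum_congr fun u _ => ?_
  rw [Finsupp.smul_sum]
  refine Finsupp.sum_congr fun v _ => ?_
  rw [mul_assoc]
  exact (smul_smul c _ _).symm

lemma mu_smul_right (c : ℚ) (x y : EC N) : mu x (c • y) = c • mu x y := by
  unfold mu
  rw [Finsupp.smul_sum]
  refine Finsupp.sum_congr fun u _ => ?_
  rw [Finsupp.sum_smul_index (by simp), Finsupp.smul_sum]
  refine Finsupp.sum_congr fun v _ => ?_
  rw [mul_left_comm]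
  exact (smul_smul c _ _).symm

lemma mu_sum_left {ι : Type*} (s : Finset ι) (f : ι → EC N) (y : EC N) :
    mu (∑ i ∈ s, f i) y = ∑ i ∈ s, mu (f i) y := by
  induction s using Finset.cons_induction with
  | empty => simp [mu_zero_left]
  | cons a s ha ih => rw [Finset.sum_cons, Finset.sum_cons, mu_add_left, ih]

lemma mu_sum_right {ι : Type*} (s : Finset ι) (f : ι → EC N) (x : EC N) :
    mu x (∑ i ∈ s, f i) = ∑ i ∈ s, mu x (f i) := by
  induction s using Finset.cons_induction with
  | empty => simp [mu_zero_right]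
  | cons a s ha ih => rw [Finset.sum_cons, Finset.sum_cons, mu_add_right, ih]

lemma iota_zero : iota N k 0 = 0 := by simp [iota]

lemma iota_single (u : B N) (c : ℚ) : iota N k (Finsupp.single u c) = c • iotaB N k u :=
  Finsupp.sum_single_index (by simp)

lemma iota_add (x y : EC N) : iota N k (x + y) = iota N k x + iota N k y :=
  Finsupp.sum_add_index' (by simp) (fun _ b₁ b₂ => add_smul b₁ b₂ _)

lemma iota_smul (c : ℚ) (x : EC N) : iota N k (c • x) = c • iota N k x := by
  unfold iota
  rw [Finsupp.sum_smul_index (by simp), Finsupp.smul_sum]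
  exact Finsupp.sum_congr fun u _ => by rw [smul_smul]

lemma iota_neg (x : EC N) : iota N k (-x) = - iota N k x := by
  have := iota_smul (N := N) (k := k) (-1) x
  simpa using this

lemma iota_sub (x y : EC N) : iota N k (x - y) = iota N k x - iota N k y := by
  rw [sub_eq_add_neg, sub_eq_add_neg, iota_add, iota_neg]

lemma bd_zero : bd (0 : EC N) = 0 := by simp [bd]

lemma bd_single (u : B N) (c : ℚ) : bd (Finsupp.single u c) = c • B.bdB u :=
  Finsupp.sum_single_index (by simp)

lemma bd_add (x y : EC N) : bd (x + y) = bd x + bd y :=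
  Finsupp.sum_add_index' (by simp) (fun _ b₁ b₂ => add_smul b₁ b₂ _)

lemma bd_smul (c : ℚ) (x : EC N) : bd (c • x) = c • bd x := by
  unfold bd
  rw [Finsupp.sum_smul_index (by simp), Finsupp.smul_sum]
  exact Finsupp.sum_congr fun u _ => by rw [smul_smul]

lemma bd_sum {ι : Type*} (s : Finset ι) (f : ι → EC N) :
    bd (∑ i ∈ s, f i) = ∑ i ∈ s, bd (f i) := by
  induction s using Finset.cons_induction with
  | empty => simp [bd_zero]
  | cons a s ha ih => rw [Finset.sum_cons, Finset.sum_cons, bd_add, ih]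


section Arith

variable {N k : ℕ}

lemma rho_add_val (hN : 3 ≤ N) (hk : 1 ≤ k) (a : ZMod N) {j : ℕ} (hj : j < k) :
    (rho N k a + (j : ZMod (N * k))).val = k * a.val + j := by
  haveI : NeZero N := ⟨by omega⟩
  haveI : NeZero (N * k) := ⟨Nat.mul_ne_zero (by omega) (by omega)⟩
  have hav : a.val < N := ZMod.val_lt a
  have h2' : k * a.val + k ≤ k * N := by
    rw [← Nat.mul_succ]; exact Nat.mul_le_mul_left k hav
  have hlt : k * a.val + j < N * k := by rw [Nat.mul_comm N k]; omega
  have h : rho N k a + (j : ZMod (N * k)) = ((k * a.val + j : ℕ) : ZMod (N * k)) := by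
    rw [rho]; push_cast; ring
  rw [h, ZMod.val_natCast, Nat.mod_eq_of_lt hlt]

lemma rho_add_inj (hN : 3 ≤ N) (hk : 1 ≤ k) {a b : ZMod N} {i j : ℕ} (hi : i < k) (hj : j < k) :
    rho N k a + (i : ZMod (N * k)) = rho N k b + (j : ZMod (N * k)) ↔ a = b ∧ i = j := by
  haveI : NeZero N := ⟨by omega⟩
  constructor
  · intro h
    have hv := congrArg ZMod.val h
    rw [rho_add_val hN hk a hi, rho_add_val hN hk b hj] at hv
    have hmod : (k * a.val + i) % k = (k * b.val + j) % k := by rw [hv]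
    rw [Nat.mul_add_mod, Nat.mul_add_mod, Nat.mod_eq_of_lt hi, Nat.mod_eq_of_lt hj] at hmod
    subst hmod
    have hval : a.val = b.val :=
      Nat.eq_of_mul_eq_mul_left (show 0 < k by omega) (by omega)
    exact ⟨ZMod.val_injective N hval, rfl⟩
  · rintro ⟨rfl, rfl⟩; rfl

lemma rho_succ (hN : 3 ≤ N) (hk : 1 ≤ k) (a : ZMod N) :
    rho N k (a + 1) = rho N k a + (k : ZMod (N * k)) := by
  haveI : NeZero N := ⟨by omega⟩
  haveI : Fact (1 < N) := ⟨by omega⟩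
  have h1 : (a + 1).val ≡ a.val + 1 [MOD N] := by
    rw [ZMod.val_add, ZMod.val_one]
    exact Nat.mod_modEq _ N
  have h2 : k * (a + 1).val ≡ k * (a.val + 1) [MOD k * N] := h1.mul_left' k
  rw [Nat.mul_comm k N] at h2
  have h3 : ((k * (a + 1).val : ℕ) : ZMod (N * k)) = ((k * (a.val + 1) : ℕ) : ZMod (N * k)) :=
    (ZMod.natCast_eq_natCast_iff _ _ _).mpr h2
  rw [rho, rho, h3]
  push_cast
  ring

lemma one_ne_zero' (hN : 3 ≤ N) : (1 : ZMod N) ≠ 0 := by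
  haveI : Fact (1 < N) := ⟨by omega⟩
  exact one_ne_zero

lemma two_ne_zero' (hN : 3 ≤ N) : (2 : ZMod N) ≠ 0 := by
  haveI : NeZero N := ⟨by omega⟩
  intro h
  have h2 : ((2 : ℕ) : ZMod N) = 0 := by exact_mod_cast h
  have hv := congrArg ZMod.val h2
  rw [ZMod.val_natCast, ZMod.val_zero, Nat.mod_eq_of_lt (by omega)] at hv
  omega

lemma ne_add_one (hN : 3 ≤ N) (a : ZMod N) : a ≠ a + 1 := by
  intro h
  have h0 : a + 0 = a + 1 := by simpa using h
  exact one_ne_zero' hN (add_left_cancel h0).symm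

lemma ne_sub_one (hN : 3 ≤ N) (a : ZMod N) : a ≠ a - 1 := by
  intro h
  have h1 : a + 1 = a + 0 := by rw [eq_sub_iff_add_eq.mp h]; ring
  exact one_ne_zero' hN (add_left_cancel h1)

lemma add_one_ne_sub_one (hN : 3 ≤ N) (a : ZMod N) : a + 1 ≠ a - 1 := by
  intro h
  have h2 : a + 1 + 1 = a := eq_sub_iff_add_eq.mp h
  have h3 : a + 2 = a + 0 := by linear_combination h2
  exact two_ne_zero' hN (add_left_cancel h3)

lemma rho_eq_succ (hN : 3 ≤ N) (hk : 1 ≤ k) {a b : ZMod N} {i j : ℕ} (hi : i < k) (hj : j < k) :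
    rho N k b + (j : ZMod (N * k)) = rho N k a + (i : ZMod (N * k)) + 1 ↔
      (i + 1 < k ∧ b = a ∧ j = i + 1) ∨ (i + 1 = k ∧ b = a + 1 ∧ j = 0) := by
  rcases Nat.lt_or_ge (i + 1) k with h | h
  · have he : rho N k a + (i : ZMod (N * k)) + 1 = rho N k a + ((i + 1 : ℕ) : ZMod (N * k)) := by
      push_cast; ring
    rw [he, rho_add_inj hN hk hj h]
    constructor
    · rintro ⟨rfl, rfl⟩; exact Or.inl ⟨h, rfl, rfl⟩
    · rintro (⟨_, rfl, rfl⟩ | ⟨hik, _, _⟩)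
      · exact ⟨rfl, rfl⟩
      · omega
  · have hik : i + 1 = k := by omega
    have he : rho N k a + (i : ZMod (N * k)) + 1 = rho N k (a + 1) + ((0 : ℕ) : ZMod (N * k)) := by
      rw [rho_succ hN hk, ← hik]
      push_cast; ring
    rw [he, rho_add_inj hN hk hj (by omega)]
    constructor
    · rintro ⟨rfl, rfl⟩; exact Or.inr ⟨hik, rfl, rfl⟩
    · rintro (⟨h', _, _⟩ | ⟨_, rfl, rfl⟩)
      · omega
      · exact ⟨rfl, rfl⟩

lemma rho_eq_pred (hN : 3 ≤ N) (hk : 1 ≤ k) {a b : ZMod N} {i j : ℕ} (hi : i < k) (hj : j < k) :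
    rho N k b + (j : ZMod (N * k)) = rho N k a + (i : ZMod (N * k)) - 1 ↔
      (1 ≤ i ∧ b = a ∧ j = i - 1) ∨ (i = 0 ∧ b = a - 1 ∧ j = k - 1) := by
  rcases Nat.eq_zero_or_pos i with rfl | h
  · have hr : rho N k (a - 1) + (k : ZMod (N * k)) = rho N k a := by
      rw [← rho_succ hN hk (a - 1), sub_add_cancel]
    have he : rho N k a + ((0 : ℕ) : ZMod (N * k)) - 1
        = rho N k (a - 1) + ((k - 1 : ℕ) : ZMod (N * k)) := by
      rw [← hr]
      have hc : ((k - 1 : ℕ) : ZMod (N * k)) = (k : ZMod (N * k)) - 1 := by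
        push_cast [Nat.cast_sub hk]; ring
      rw [hc]
      push_cast; ring
    rw [he, rho_add_inj hN hk hj (by omega)]
    constructor
    · rintro ⟨rfl, rfl⟩; exact Or.inr ⟨rfl, rfl, rfl⟩
    · rintro (⟨h', _, _⟩ | ⟨_, rfl, rfl⟩)
      · omega
      · exact ⟨rfl, rfl⟩
  · have he : rho N k a + (i : ZMod (N * k)) - 1 = rho N k a + ((i - 1 : ℕ) : ZMod (N * k)) := by
      push_cast [Nat.cast_sub h]; ring
    rw [he, rho_add_inj hN hk hj (by omega)]
    constructor
    · rintro ⟨rfl, rfl⟩; exact Or.inl ⟨h, rfl, rfl⟩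
    · rintro (⟨_, rfl, rfl⟩ | ⟨hik, _, _⟩)
      · exact ⟨rfl, rfl⟩
      · omega

lemma rho_eq_base (hN : 3 ≤ N) (hk : 1 ≤ k) {a b : ZMod N} {j : ℕ} (hj : j < k) :
    rho N k b + (j : ZMod (N * k)) = rho N k a ↔ b = a ∧ j = 0 := by
  have h := rho_add_inj hN hk (a := b) (b := a) hj (show 0 < k by omega) (i := j) (j := 0)
  simpa using h

lemma rho_inj (hN : 3 ≤ N) (hk : 1 ≤ k) {a b : ZMod N} : rho N k b = rho N k a ↔ b = a := by
  have h := rho_add_inj hN hk (a := b) (b := a) (show 0 < k by omega) (show 0 < k by omega)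
    (i := 0) (j := 0)
  simpa using h

lemma rho_eq_base_pred (hN : 3 ≤ N) (hk : 1 ≤ k) {a b : ZMod N} {j : ℕ} (hj : j < k) :
    rho N k b + (j : ZMod (N * k)) = rho N k a - 1 ↔ b = a - 1 ∧ j = k - 1 := by
  have h := rho_eq_pred hN hk (a := a) (b := b) (show 0 < k by omega) hj (i := 0)
  simp only [Nat.cast_zero, add_zero] at h
  rw [h]
  simp

lemma rho_eq_succ_base (hN : 3 ≤ N) (hk : 1 ≤ k) {a b : ZMod N} {j : ℕ} (hj : j < k) :
    rho N k b = rho N k a + (j : ZMod (N * k)) + 1 ↔ b = a + 1 ∧ j = k - 1 := by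
  have h := rho_eq_succ hN hk (a := a) (b := b) hj (show 0 < k by omega) (i := j) (j := 0)
  simp only [Nat.cast_zero, add_zero] at h
  rw [h]
  constructor
  · rintro (⟨_, _, h0⟩ | ⟨h1, rfl, _⟩)
    · omega
    · exact ⟨rfl, by omega⟩
  · rintro ⟨rfl, rfl⟩
    exact Or.inr ⟨by omega, rfl, trivial⟩

end Arith


section Cases

variable {N k : ℕ}

lemma sum_ite_eq_range {M : Type*} [AddCommMonoid M] {k : ℕ} (c : ℕ) (hc : c < k) (f : ℕ → M) :
    (∑ j ∈ Finset.range k, if j = c then f j else 0) = f c := by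
  rw [Finset.sum_ite_eq' (Finset.range k) c f]
  simp [hc]

lemma iota_bdB (hN : 3 ≤ N) (hk : 1 ≤ k) (u : B N) :
    iota N k (B.bdB u) = bd (iotaB N k u) := by
  cases u with
  | P a => simp [B.bdB, iotaB, iota_zero, bd_single]
  | I a => simp [B.bdB, iotaB, iota_zero, bd_single]
  | S a =>
    have h1 : ∀ j ∈ Finset.range k,
        bd (Finsupp.single (B.S (rho N k a + (j : ZMod (N * k)))) (1 : ℚ))
        = (fun j : ℕ => Finsupp.single (B.P (rho N k a + (j : ZMod (N * k)))) (1 : ℚ)) (j + 1)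
          - (fun j : ℕ => Finsupp.single (B.P (rho N k a + (j : ZMod (N * k)))) (1 : ℚ)) j := by
      intro j hj
      rw [bd_single, one_smul]
      simp only [B.bdB]
      have : rho N k a + ((j : ZMod (N * k))) + 1 = rho N k a + ((j + 1 : ℕ) : ZMod (N * k)) := by
        push_cast; ring
      rw [this]
    simp only [iotaB, bd_sum]
    rw [Finset.sum_congr rfl h1, Finset.sum_range_sub (fun j : ℕ => Finsupp.single (B.P (rho N k a + (j : ZMod (N * k)))) (1 : ℚ)) k]
    simp only [B.bdB, iota_sub, iota_single, one_smul, iotaB, Nat.cast_zero, add_zero,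
      rho_succ hN hk]

lemma iota_muB_PP (hN : 3 ≤ N) (hk : 1 ≤ k) (a b : ZMod N) :
    iota N k (B.muB (B.P a) (B.P b)) = mu (iotaB N k (B.P a)) (iotaB N k (B.P b)) := by
  simp [B.muB, iotaB, iota_zero, mu_single_single]

lemma iota_muB_PI (hN : 3 ≤ N) (hk : 1 ≤ k) (a b : ZMod N) :
    iota N k (B.muB (B.P a) (B.I b)) = mu (iotaB N k (B.P a)) (iotaB N k (B.I b)) := by
  simp only [iotaB, mu_single_single, one_mul, one_smul, B.muB]
  simp only [rho_inj hN hk]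
  by_cases hba : b = a
  · simp [hba, iota_single, iotaB, Finsupp.smul_single]
  · simp [hba, iota_zero]

lemma iota_muB_IP (hN : 3 ≤ N) (hk : 1 ≤ k) (a b : ZMod N) :
    iota N k (B.muB (B.I a) (B.P b)) = mu (iotaB N k (B.I a)) (iotaB N k (B.P b)) := by
  simp only [iotaB, mu_single_single, one_mul, one_smul, B.muB]
  simp only [rho_inj hN hk]
  by_cases hab : a = b
  · simp [hab, iota_single, iotaB, Finsupp.smul_single]
  · simp [hab, iota_zero]

lemma iota_muB_II (hN : 3 ≤ N) (hk : 1 ≤ k) (a b : ZMod N) :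
    iota N k (B.muB (B.I a) (B.I b)) = mu (iotaB N k (B.I a)) (iotaB N k (B.I b)) := by
  simp only [iotaB, mu_single_single, one_mul, one_smul, B.muB]
  simp only [rho_inj hN hk]
  by_cases hba : b = a
  · simp [hba, iota_single, iotaB, Finsupp.smul_single]
  · simp [hba, iota_zero]

end Cases


section Cases2

variable {N k : ℕ}

lemma rho_eq_base' (hN : 3 ≤ N) (hk : 1 ≤ k) {a b : ZMod N} {j : ℕ} (hj : j < k) :
    rho N k b = rho N k a + (j : ZMod (N * k)) ↔ b = a ∧ j = 0 := by
  have h := rho_add_inj hN hk (a := b) (b := a) (show 0 < k by omega) hj (i := 0)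
  simp only [Nat.cast_zero, add_zero] at h
  rw [h, eq_comm (a := (0:ℕ))]

lemma iota_muB_PS (hN : 3 ≤ N) (hk : 1 ≤ k) (a b : ZMod N) :
    iota N k (B.muB (B.P a) (B.S b)) = mu (iotaB N k (B.P a)) (iotaB N k (B.S b)) := by
  have hane : a ≠ a - 1 := ne_sub_one hN a
  have hane' : a - 1 ≠ a := fun h => hane h.symm
  simp only [iotaB, mu_sum_right]
  have hsum : ∀ j ∈ Finset.range k,
      mu (Finsupp.single (B.P (rho N k a)) (1 : ℚ))
        (Finsupp.single (B.S (rho N k b + (j : ZMod (N * k)))) (1 : ℚ))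
      = if b = a ∧ j = 0 ∨ b = a - 1 ∧ j = k - 1
          then Finsupp.single (B.P (rho N k a)) (1/2 : ℚ) else 0 := by
    intro j hj
    rw [Finset.mem_range] at hj
    rw [mu_single_single, one_mul, one_smul]
    simp only [B.muB]
    simp only [rho_eq_base hN hk hj, rho_eq_base_pred hN hk hj]
  rw [Finset.sum_congr rfl hsum]
  by_cases hba : b = a <;> by_cases hba' : b = a - 1
  · exact absurd (hba.symm.trans hba') hane
  · simp [B.muB, hba, hane, iota_single, iotaB, Finsupp.smul_single,
      Finset.sum_ite_eq', show 0 < k by omega]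
  · simp [B.muB, hba', hane', iota_single, iotaB, Finsupp.smul_single,
      Finset.sum_ite_eq', show k - 1 < k by omega]
  · simp [B.muB, hba, hba', iota_zero]

lemma iota_muB_SP (hN : 3 ≤ N) (hk : 1 ≤ k) (a b : ZMod N) :
    iota N k (B.muB (B.S a) (B.P b)) = mu (iotaB N k (B.S a)) (iotaB N k (B.P b)) := by
  have hbne : b ≠ b - 1 := ne_sub_one hN b
  have hbne' : b - 1 ≠ b := fun h => hbne h.symm
  simp only [iotaB, mu_sum_left]
  have hsum : ∀ j ∈ Finset.range k,
      mu (Finsupp.single (B.S (rho N k a + (j : ZMod (N * k)))) (1 : ℚ))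
        (Finsupp.single (B.P (rho N k b)) (1 : ℚ))
      = if a = b ∧ j = 0 ∨ a = b - 1 ∧ j = k - 1
          then Finsupp.single (B.P (rho N k b)) (1/2 : ℚ) else 0 := by
    intro j hj
    rw [Finset.mem_range] at hj
    rw [mu_single_single, one_mul, one_smul]
    simp only [B.muB]
    simp only [rho_eq_base hN hk hj, rho_eq_base_pred hN hk hj]
  rw [Finset.sum_congr rfl hsum]
  by_cases hab : a = b <;> by_cases hab' : a = b - 1
  · exact absurd (hab.symm.trans hab') hbne
  · simp [B.muB, hab, hbne, iota_single, iotaB, Finsupp.smul_single,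
      Finset.sum_ite_eq', show 0 < k by omega]
  · simp [B.muB, hab', hbne', iota_single, iotaB, Finsupp.smul_single,
      Finset.sum_ite_eq', show k - 1 < k by omega]
  · simp [B.muB, hab, hab', iota_zero]

lemma iota_muB_SI (hN : 3 ≤ N) (hk : 1 ≤ k) (a b : ZMod N) :
    iota N k (B.muB (B.S a) (B.I b)) = mu (iotaB N k (B.S a)) (iotaB N k (B.I b)) := by
  have hane : a ≠ a + 1 := ne_add_one hN a
  have hane' : a + 1 ≠ a := fun h => hane h.symm
  simp only [iotaB, mu_sum_left]
  have hsum : ∀ j ∈ Finset.range k,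
      mu (Finsupp.single (B.S (rho N k a + (j : ZMod (N * k)))) (1 : ℚ))
        (Finsupp.single (B.I (rho N k b)) (1 : ℚ))
      = if b = a ∧ j = 0 ∨ b = a + 1 ∧ j = k - 1
          then Finsupp.single (B.I (rho N k b)) (1/2 : ℚ) else 0 := by
    intro j hj
    rw [Finset.mem_range] at hj
    rw [mu_single_single, one_mul, one_smul]
    simp only [B.muB]
    simp only [rho_eq_base' hN hk hj, rho_eq_succ_base hN hk hj]
  rw [Finset.sum_congr rfl hsum]
  by_cases hba : b = a <;> by_cases hba' : b = a + 1
  · exact absurd (hba.symm.trans hba') hane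
  · simp [B.muB, hba, hane', one_ne_zero' hN, iota_single, iotaB, Finsupp.smul_single,
      Finset.sum_ite_eq', show 0 < k by omega]
  · simp [B.muB, hba, hba', hane, one_ne_zero' hN, iota_single, iotaB, Finsupp.smul_single,
      Finset.sum_ite_eq', show k - 1 < k by omega]
  · simp [B.muB, hba, hba', iota_zero]

lemma iota_muB_IS (hN : 3 ≤ N) (hk : 1 ≤ k) (a b : ZMod N) :
    iota N k (B.muB (B.I a) (B.S b)) = mu (iotaB N k (B.I a)) (iotaB N k (B.S b)) := by
  have hbne : b ≠ b + 1 := ne_add_one hN b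
  have hbne' : b + 1 ≠ b := fun h => hbne h.symm
  simp only [iotaB, mu_sum_right]
  have hsum : ∀ j ∈ Finset.range k,
      mu (Finsupp.single (B.I (rho N k a)) (1 : ℚ))
        (Finsupp.single (B.S (rho N k b + (j : ZMod (N * k)))) (1 : ℚ))
      = if a = b ∧ j = 0 ∨ a = b + 1 ∧ j = k - 1
          then Finsupp.single (B.I (rho N k a)) (1/2 : ℚ) else 0 := by
    intro j hj
    rw [Finset.mem_range] at hj
    rw [mu_single_single, one_mul, one_smul]
    simp only [B.muB]
    simp only [rho_eq_base' hN hk hj, rho_eq_succ_base hN hk hj]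
  rw [Finset.sum_congr rfl hsum]
  by_cases hab : a = b <;> by_cases hab' : a = b + 1
  · exact absurd (hab.symm.trans hab') hbne
  · simp [B.muB, hab, hbne', one_ne_zero' hN, iota_single, iotaB, Finsupp.smul_single,
      Finset.sum_ite_eq', show 0 < k by omega]
  · simp [B.muB, hab, hab', hbne, one_ne_zero' hN, iota_single, iotaB, Finsupp.smul_single,
      Finset.sum_ite_eq', show k - 1 < k by omega]
  · simp [B.muB, hab, hab', iota_zero]

end Cases2


section Cases3

variable {N k : ℕ}

lemma iota_muB_SS (hN : 3 ≤ N) (hk : 1 ≤ k) (a b : ZMod N) :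
    iota N k (B.muB (B.S a) (B.S b)) = mu (iotaB N k (B.S a)) (iotaB N k (B.S b)) := by
  have hane : a ≠ a + 1 := ne_add_one hN a
  have hane2 : a ≠ a - 1 := ne_sub_one hN a
  have hane3 : a + 1 ≠ a - 1 := add_one_ne_sub_one hN a
  have hane' : a + 1 ≠ a := fun h => hane h.symm
  have hane2' : a - 1 ≠ a := fun h => hane2 h.symm
  have hane3' : a - 1 ≠ a + 1 := fun h => hane3 h.symm
  simp only [iotaB]
  rw [mu_sum_left]
  simp only [mu_sum_right]
  by_cases hba : b = a
  · subst hba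
    -- diagonal case, with telescoping
    have hsum : ∀ i ∈ Finset.range k, ∀ j ∈ Finset.range k,
        mu (Finsupp.single (B.S (rho N k b + (i : ZMod (N * k)))) (1 : ℚ))
          (Finsupp.single (B.S (rho N k b + (j : ZMod (N * k)))) (1 : ℚ))
        = (if j = i then
             (- Finsupp.single (B.I (rho N k b + (i : ZMod (N * k)))) (1 : ℚ)
              + Finsupp.single (B.S (rho N k b + (i : ZMod (N * k)))) (1 : ℚ)
              - Finsupp.single (B.I (rho N k b + ((i + 1 : ℕ) : ZMod (N * k)))) (1 : ℚ)) else 0)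
          + (if i + 1 < k ∧ j = i + 1 then
              Finsupp.single (B.I (rho N k b + ((i + 1 : ℕ) : ZMod (N * k)))) (1 : ℚ) else 0)
          + (if 1 ≤ i ∧ j = i - 1 then
              Finsupp.single (B.I (rho N k b + (i : ZMod (N * k)))) (1 : ℚ) else 0) := by
      intro i hi j hj
      rw [Finset.mem_range] at hi hj
      rw [mu_single_single, one_mul, one_smul]
      simp only [B.muB]
      simp only [rho_add_inj hN hk hj hi, rho_eq_succ hN hk hi hj, rho_eq_pred hN hk hi hj]
      have hc : rho N k b + (i : ZMod (N * k)) + 1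
          = rho N k b + ((i + 1 : ℕ) : ZMod (N * k)) := by push_cast; ring
      rw [hc]
      simp only [Finsupp.single_neg, eq_self_iff_true, true_and, and_true, hane, hane2,
        false_and, and_false, or_false, false_or]
      split_ifs with h1 h2 h3 <;> first | (exfalso; omega) | abel
    rw [Finset.sum_congr rfl (fun i hi => Finset.sum_congr rfl (fun j hj => hsum i hi j hj))]
    have houter : ∀ i ∈ Finset.range k,
        (∑ j ∈ Finset.range k,
          ((if j = i then
             (- Finsupp.single (B.I (rho N k b + (i : ZMod (N * k)))) (1 : ℚ)
              + Finsupp.single (B.S (rho N k b + (i : ZMod (N * k)))) (1 : ℚ)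
              - Finsupp.single (B.I (rho N k b + ((i + 1 : ℕ) : ZMod (N * k)))) (1 : ℚ)) else 0)
          + (if i + 1 < k ∧ j = i + 1 then
              Finsupp.single (B.I (rho N k b + ((i + 1 : ℕ) : ZMod (N * k)))) (1 : ℚ) else 0)
          + (if 1 ≤ i ∧ j = i - 1 then
              Finsupp.single (B.I (rho N k b + (i : ZMod (N * k)))) (1 : ℚ) else 0)))
        = (- Finsupp.single (B.I (rho N k b + (i : ZMod (N * k)))) (1 : ℚ)
              + Finsupp.single (B.S (rho N k b + (i : ZMod (N * k)))) (1 : ℚ)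
              - Finsupp.single (B.I (rho N k b + ((i + 1 : ℕ) : ZMod (N * k)))) (1 : ℚ))
          + (if i + 1 < k then
              Finsupp.single (B.I (rho N k b + ((i + 1 : ℕ) : ZMod (N * k)))) (1 : ℚ) else 0)
          + (if 1 ≤ i then
              Finsupp.single (B.I (rho N k b + (i : ZMod (N * k)))) (1 : ℚ) else 0) := by
      intro i hi
      rw [Finset.mem_range] at hi
      rw [Finset.sum_add_distrib, Finset.sum_add_distrib]
      congr 1
      · congr 1
        · exact sum_ite_eq_range i hi _
        · by_cases hik : i + 1 < k
          · simp only [hik, true_and, if_true]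
            exact sum_ite_eq_range (i+1) hik _
          · simp [hik]
      · by_cases h1i : 1 ≤ i
        · simp only [h1i, true_and, if_true]
          exact sum_ite_eq_range (i-1) (by omega) _
        · simp [h1i]
    rw [Finset.sum_congr rfl houter]
    obtain ⟨m, rfl⟩ : ∃ m, k = m + 1 := ⟨k - 1, by omega⟩
    rw [Finset.sum_add_distrib, Finset.sum_add_distrib]
    -- the three pieces
    have e1 : (∑ i ∈ Finset.range (m+1),
        (- Finsupp.single (B.I (rho N (m+1) b + (i : ZMod (N * (m+1))))) (1 : ℚ)
         + Finsupp.single (B.S (rho N (m+1) b + (i : ZMod (N * (m+1))))) (1 : ℚ)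
         - Finsupp.single (B.I (rho N (m+1) b + ((i + 1 : ℕ) : ZMod (N * (m+1))))) (1 : ℚ)))
        = - (∑ i ∈ Finset.range (m+1),
              Finsupp.single (B.I (rho N (m+1) b + (i : ZMod (N * (m+1))))) (1 : ℚ))
          + (∑ i ∈ Finset.range (m+1),
              Finsupp.single (B.S (rho N (m+1) b + (i : ZMod (N * (m+1))))) (1 : ℚ))
          - (∑ i ∈ Finset.range (m+1),
              Finsupp.single (B.I (rho N (m+1) b + ((i + 1 : ℕ) : ZMod (N * (m+1))))) (1 : ℚ)) := by
      rw [Finset.sum_sub_distrib, Finset.sum_add_distrib, Finset.sum_neg_distrib]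
    have e2 : (∑ i ∈ Finset.range (m+1), (if i + 1 < m + 1 then
        Finsupp.single (B.I (rho N (m+1) b + ((i + 1 : ℕ) : ZMod (N * (m+1))))) (1 : ℚ) else 0))
        = ∑ i ∈ Finset.range m,
            Finsupp.single (B.I (rho N (m+1) b + ((i + 1 : ℕ) : ZMod (N * (m+1))))) (1 : ℚ) := by
      rw [Finset.sum_range_succ, if_neg (by omega), add_zero]
      exact Finset.sum_congr rfl fun i hi => if_pos (by rw [Finset.mem_range] at hi; omega)
    have e3 : (∑ i ∈ Finset.range (m+1), (if 1 ≤ i then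
        Finsupp.single (B.I (rho N (m+1) b + (i : ZMod (N * (m+1))))) (1 : ℚ) else 0))
        = ∑ i ∈ Finset.range m,
            Finsupp.single (B.I (rho N (m+1) b + ((i + 1 : ℕ) : ZMod (N * (m+1))))) (1 : ℚ) := by
      rw [Finset.sum_range_succ']
      rw [if_neg (by omega), add_zero]
      exact Finset.sum_congr rfl fun i hi => if_pos (by omega)
    rw [e1, e2, e3]
    have e4 : (∑ i ∈ Finset.range (m+1),
        Finsupp.single (B.I (rho N (m+1) b + (i : ZMod (N * (m+1))))) (1 : ℚ))
        = (∑ i ∈ Finset.range m,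
            Finsupp.single (B.I (rho N (m+1) b + ((i + 1 : ℕ) : ZMod (N * (m+1))))) (1 : ℚ))
          + Finsupp.single (B.I (rho N (m+1) b + ((0 : ℕ) : ZMod (N * (m+1))))) (1 : ℚ) := by
      rw [Finset.sum_range_succ']
    have e5 : (∑ i ∈ Finset.range (m+1),
        Finsupp.single (B.I (rho N (m+1) b + ((i + 1 : ℕ) : ZMod (N * (m+1))))) (1 : ℚ))
        = (∑ i ∈ Finset.range m,
            Finsupp.single (B.I (rho N (m+1) b + ((i + 1 : ℕ) : ZMod (N * (m+1))))) (1 : ℚ))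
          + Finsupp.single (B.I (rho N (m+1) b + ((m + 1 : ℕ) : ZMod (N * (m+1))))) (1 : ℚ) := by
      rw [Finset.sum_range_succ]
    rw [e4, e5]
    -- LHS
    have hL : B.muB (B.S b) (B.S b)
        = -Finsupp.single (B.I b) 1 + Finsupp.single (B.S b) 1 - Finsupp.single (B.I (b+1)) 1 := by
      simp [B.muB, Finsupp.single_neg]
      try abel
    rw [hL, iota_sub, iota_add, iota_neg, iota_single, iota_single, iota_single]
    simp only [iotaB, one_smul]
    rw [rho_succ hN hk b]
    have e7 : rho N (m+1) b + ((0 : ℕ) : ZMod (N * (m+1))) = rho N (m+1) b := by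
      push_cast; ring
    rw [e7]
    abel
  · by_cases hba1 : b = a + 1
    · subst hba1
      have hsum : ∀ i ∈ Finset.range k, ∀ j ∈ Finset.range k,
          mu (Finsupp.single (B.S (rho N k a + (i : ZMod (N * k)))) (1 : ℚ))
            (Finsupp.single (B.S (rho N k (a + 1) + (j : ZMod (N * k)))) (1 : ℚ))
          = if i + 1 = k ∧ j = 0 then
              Finsupp.single (B.I (rho N k a + ((i + 1 : ℕ) : ZMod (N * k)))) (1 : ℚ) else 0 := by
        intro i hi j hj
        rw [Finset.mem_range] at hi hj
        rw [mu_single_single, one_mul, one_smul]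
        simp only [B.muB]
        simp only [rho_add_inj hN hk hj hi, rho_eq_succ hN hk hi hj, rho_eq_pred hN hk hi hj]
        have hc : rho N k a + (i : ZMod (N * k)) + 1
            = rho N k a + ((i + 1 : ℕ) : ZMod (N * k)) := by push_cast; ring
        rw [hc]
        simp [hane', hane3]
      rw [Finset.sum_congr rfl (fun i hi => Finset.sum_congr rfl (fun j hj => hsum i hi j hj))]
      have houter : ∀ i ∈ Finset.range k,
          (∑ j ∈ Finset.range k, if i + 1 = k ∧ j = 0 then
              Finsupp.single (B.I (rho N k a + ((i + 1 : ℕ) : ZMod (N * k)))) (1 : ℚ) else 0)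
          = if i = k - 1 then
              Finsupp.single (B.I (rho N k a + ((k : ℕ) : ZMod (N * k)))) (1 : ℚ) else 0 := by
        intro i hi
        rw [Finset.mem_range] at hi
        by_cases hik : i + 1 = k
        · simp only [hik, eq_self_iff_true, true_and]
          rw [sum_ite_eq_range 0 (by omega) _, if_pos (by omega)]
        · rw [if_neg (by omega)]
          simp [hik]
      rw [Finset.sum_congr rfl houter, sum_ite_eq_range (k-1) (by omega) _]
      have hL : B.muB (B.S a) (B.S (a + 1)) = Finsupp.single (B.I (a + 1)) (1 : ℚ) := by
        simp [B.muB, hane']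
      rw [hL, iota_single, one_smul]
      simp only [iotaB]
      rw [rho_succ hN hk a]
    · by_cases hbm1 : b = a - 1
      · subst hbm1
        have hsum : ∀ i ∈ Finset.range k, ∀ j ∈ Finset.range k,
            mu (Finsupp.single (B.S (rho N k a + (i : ZMod (N * k)))) (1 : ℚ))
              (Finsupp.single (B.S (rho N k (a - 1) + (j : ZMod (N * k)))) (1 : ℚ))
            = if i = 0 ∧ j = k - 1 then
                Finsupp.single (B.I (rho N k a + (i : ZMod (N * k)))) (1 : ℚ) else 0 := by
          intro i hi j hj
          rw [Finset.mem_range] at hi hj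
          rw [mu_single_single, one_mul, one_smul]
          simp only [B.muB]
          simp only [rho_add_inj hN hk hj hi, rho_eq_succ hN hk hi hj, rho_eq_pred hN hk hi hj]
          simp [hane2', hane3']
        rw [Finset.sum_congr rfl (fun i hi => Finset.sum_congr rfl (fun j hj => hsum i hi j hj))]
        have houter : ∀ i ∈ Finset.range k,
            (∑ j ∈ Finset.range k, if i = 0 ∧ j = k - 1 then
                Finsupp.single (B.I (rho N k a + (i : ZMod (N * k)))) (1 : ℚ) else 0)
            = if i = 0 then
                Finsupp.single (B.I (rho N k a + ((0 : ℕ) : ZMod (N * k)))) (1 : ℚ) else 0 := by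
          intro i hi
          rw [Finset.mem_range] at hi
          by_cases hi0 : i = 0
          · simp only [hi0, eq_self_iff_true, true_and, if_true]
            exact sum_ite_eq_range (k-1) (by omega) _
          · rw [if_neg hi0]
            simp [hi0]
        rw [Finset.sum_congr rfl houter, sum_ite_eq_range 0 (by omega) _]
        have hL : B.muB (B.S a) (B.S (a - 1)) = Finsupp.single (B.I a) (1 : ℚ) := by
          simp [B.muB, hane2', hane3']
        rw [hL, iota_single, one_smul]
        simp only [iotaB]
        have e0 : rho N k a + ((0 : ℕ) : ZMod (N * k)) = rho N k a := by push_cast; ring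
        rw [e0]
      · have hsum : ∀ i ∈ Finset.range k, ∀ j ∈ Finset.range k,
            mu (Finsupp.single (B.S (rho N k a + (i : ZMod (N * k)))) (1 : ℚ))
              (Finsupp.single (B.S (rho N k b + (j : ZMod (N * k)))) (1 : ℚ)) = 0 := by
          intro i hi j hj
          rw [Finset.mem_range] at hi hj
          rw [mu_single_single, one_mul, one_smul]
          simp only [B.muB]
          simp only [rho_add_inj hN hk hj hi, rho_eq_succ hN hk hi hj, rho_eq_pred hN hk hi hj]
          simp [hba, hba1, hbm1]
        rw [Finset.sum_congr rfl (fun i hi => Finset.sum_congr rfl (fun j hj => hsum i hi j hj))]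
        have hL : B.muB (B.S a) (B.S b) = 0 := by
          simp [B.muB, hba, hba1, hbm1]
        simp [hL, iota_zero]

end Cases3

lemma iota_muB {N k : ℕ} (hN : 3 ≤ N) (hk : 1 ≤ k) (u v : B N) :
    iota N k (B.muB u v) = mu (iotaB N k u) (iotaB N k v) := by
  cases u <;> cases v
  exacts [iota_muB_PP hN hk _ _, iota_muB_PS hN hk _ _, iota_muB_PI hN hk _ _,
    iota_muB_SP hN hk _ _, iota_muB_SS hN hk _ _, iota_muB_SI hN hk _ _,
    iota_muB_IP hN hk _ _, iota_muB_IS hN hk _ _, iota_muB_II hN hk _ _]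

end IotaAux

open IotaAux in
/-- the crumbling map commutes with the boundary operator and with the
intersection product. -/
theorem iota_comm_bd_mu (N : ℕ) (hN : 3 ≤ N) (k : ℕ) (hk : 1 ≤ k) :
    (∀ x : EC N, iota N k (bd x) = bd (iota N k x)) ∧
    (∀ x y : EC N, iota N k (mu x y) = mu (iota N k x) (iota N k y)) := by
  constructor
  · intro x
    induction x using Finsupp.induction_linear with
    | zero => simp [iota_zero, bd_zero]
    | add f g hf hg => rw [bd_add, iota_add, iota_add, bd_add, hf, hg]
    | single u c =>
      rw [bd_single, iota_smul, iota_single, bd_smul, iota_bdB hN hk]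
  · intro x y
    induction x using Finsupp.induction_linear with
    | zero => simp [iota_zero, mu_zero_left]
    | add f g hf hg => rw [mu_add_left, iota_add, iota_add, mu_add_left, hf, hg]
    | single u c =>
      induction y using Finsupp.induction_linear with
      | zero => simp [iota_zero, mu_zero_right]
      | add f g hf hg => rw [mu_add_right, iota_add, iota_add, mu_add_right, hf, hg]
      | single v d =>
        rw [mu_single_single, iota_smul, iota_muB hN hk, iota_single, iota_single,
          mu_smul_left, mu_smul_right, smul_smul]
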